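/- For uniform fragmentation with B > 0 and ϱ > 0, n(x,t) = ϱ·4B²x e^{-2Bx} + e^{-Bt}·x(Bx-2)e^{-Bx} solves the uniform fragmentation equation with initial condition n⁰(x) = 4ϱB²xe^{-2Bx} + x(Bx-2)e^{-Bx}, and ∫₀^∞ |n(x,t) - ϱN(x)| dx = e^{-Bt}∫₀^∞ |x(Bx-2)e^{-Bx}| dx, showing optimality of the rate (k-1)B = B. -/

import Mathlib

open MeasureTheory Set Filter

lemma aux_exp_deriv (c y : ℝ) :
    HasDerivAt (fun y : ℝ => Real.exp (-(c * y))) (-c * Real.exp (-(c * y))) y := by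
  have h : HasDerivAt (fun y : ℝ => -(c * y)) (-c) y := by
    simpa using ((hasDerivAt_id y).const_mul c).fun_neg
  simpa [mul_comm] using h.exp

lemma aux_tendsto (c : ℝ) (hc : 0 < c) (n : ℕ) :
    Tendsto (fun y : ℝ => y ^ n * Real.exp (-(c * y))) atTop (nhds 0) := by
  have h := (Real.tendsto_pow_mul_exp_neg_atTop_nhds_zero n).comp
    (Tendsto.const_mul_atTop hc tendsto_id)
  have h2 := h.const_mul ((1 : ℝ) / c ^ n)
  rw [mul_zero] at h2
  refine h2.congr fun y => ?_
  simp only [Function.comp, id_eq, mul_pow]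
  field_simp

lemma aux_int_x_exp {B x : ℝ} (hB : 0 < B) (hx : 0 < x) :
    IntegrableOn (fun y : ℝ => y * Real.exp (-(B * y))) (Ioi x) := by
  have hderiv : ∀ y ∈ Ici x, HasDerivAt
      (fun y : ℝ => -((y / B + 1 / B ^ 2) * Real.exp (-(B * y))))
      (y * Real.exp (-(B * y))) y := by
    intro y _
    have h1 : HasDerivAt (fun y : ℝ => y / B + 1 / B ^ 2) (1 / B) y :=
      ((hasDerivAt_id y).div_const B).add_const (1 / B ^ 2)
    have h := (h1.fun_mul (aux_exp_deriv B y)).fun_neg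
    refine h.congr_deriv ?_
    field_simp
    ring
  have hlim : Tendsto (fun y : ℝ => -((y / B + 1 / B ^ 2) * Real.exp (-(B * y))))
      atTop (nhds 0) := by
    have h1 := (aux_tendsto B hB 1).const_mul (1 / B)
    have h0 := (aux_tendsto B hB 0).const_mul (1 / B ^ 2)
    have := ((h1.add h0).neg)
    simp only [mul_zero, add_zero, neg_zero] at this
    refine this.congr fun y => ?_
    simp only [pow_one, pow_zero, one_mul]
    ring
  refine integrableOn_Ioi_deriv_of_nonneg' hderiv (fun y hy => ?_) hlim
  exact mul_nonneg (le_of_lt (hx.trans hy)) (Real.exp_pos _).le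

set_option maxHeartbeats 1000000 in
lemma aux_key_integral (B ϱ t x : ℝ) (hB : 0 < B) (hx : 0 < x) :
    (∫ y in Ioi x,
        (ϱ * (4 * B ^ 2 * y * Real.exp (-(2 * B * y)))
          + Real.exp (-(B * t)) * (y * (B * y - 2) * Real.exp (-(B * y)))) / y)
      = ϱ * (2 * B) * Real.exp (-(2 * B * x))
        + Real.exp (-(B * t)) * ((x - 1 / B) * Real.exp (-(B * x))) := by
  have hcongr : ∀ y ∈ Ioi x,
      (ϱ * (4 * B ^ 2 * y * Real.exp (-(2 * B * y)))
        + Real.exp (-(B * t)) * (y * (B * y - 2) * Real.exp (-(B * y)))) / y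
      = ϱ * (4 * B ^ 2) * Real.exp (-(2 * B * y))
        + Real.exp (-(B * t)) * ((B * y - 2) * Real.exp (-(B * y))) := by
    intro y hy
    have hy0 : y ≠ 0 := (hx.trans hy).ne'
    field_simp
  rw [setIntegral_congr_fun measurableSet_Ioi hcongr]
  -- antiderivative
  set F : ℝ → ℝ := fun y => -(ϱ * (2 * B) * Real.exp (-(2 * B * y)))
      - Real.exp (-(B * t)) * ((y - 1 / B) * Real.exp (-(B * y))) with hF
  have hderiv : ∀ y ∈ Ici x, HasDerivAt F
      (ϱ * (4 * B ^ 2) * Real.exp (-(2 * B * y))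
        + Real.exp (-(B * t)) * ((B * y - 2) * Real.exp (-(B * y)))) y := by
    intro y _
    have h1 := ((aux_exp_deriv (2 * B) y).const_mul (ϱ * (2 * B))).fun_neg
    have h2' : HasDerivAt (fun y : ℝ => y - 1 / B) 1 y := (hasDerivAt_id y).sub_const _
    have h2 := ((h2'.fun_mul (aux_exp_deriv B y)).const_mul (Real.exp (-(B * t))))
    have h := h1.fun_sub h2
    refine h.congr_deriv ?_
    have hB0 : B ≠ 0 := hB.ne'
    field_simp
    ring
  have hint : IntegrableOn (fun y : ℝ =>
      ϱ * (4 * B ^ 2) * Real.exp (-(2 * B * y))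
        + Real.exp (-(B * t)) * ((B * y - 2) * Real.exp (-(B * y)))) (Ioi x) := by
    have h2B : (0:ℝ) < 2 * B := by positivity
    have i1 : IntegrableOn (fun y : ℝ => Real.exp (-(2 * B * y))) (Ioi x) := by
      simpa [neg_mul] using exp_neg_integrableOn_Ioi x h2B
    have i2 : IntegrableOn (fun y : ℝ => Real.exp (-(B * y))) (Ioi x) := by
      simpa [neg_mul] using exp_neg_integrableOn_Ioi x hB
    have i3 := aux_int_x_exp hB hx
    have j1 : IntegrableOn (fun y : ℝ => ϱ * (4 * B ^ 2) * Real.exp (-(2 * B * y))) (Ioi x) :=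
      i1.const_mul _
    have j2 : IntegrableOn (fun y : ℝ =>
        (Real.exp (-(B * t)) * B) * (y * Real.exp (-(B * y)))) (Ioi x) := i3.const_mul _
    have j3 : IntegrableOn (fun y : ℝ =>
        (Real.exp (-(B * t)) * 2) * Real.exp (-(B * y))) (Ioi x) := i2.const_mul _
    have j : IntegrableOn (fun y : ℝ => ϱ * (4 * B ^ 2) * Real.exp (-(2 * B * y))
        + ((Real.exp (-(B * t)) * B) * (y * Real.exp (-(B * y)))
          - (Real.exp (-(B * t)) * 2) * Real.exp (-(B * y)))) (Ioi x) := j1.add (j2.sub j3)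
    refine j.congr_fun (fun y _ => ?_) measurableSet_Ioi
    ring
  have hlim : Tendsto F atTop (nhds 0) := by
    have h1 := ((aux_tendsto (2 * B) (by positivity) 0).const_mul (ϱ * (2 * B))).neg
    have h2a := (aux_tendsto B hB 1).const_mul (Real.exp (-(B * t)))
    have h2b := (aux_tendsto B hB 0).const_mul (Real.exp (-(B * t)) * (1 / B))
    have h := h1.sub (h2a.sub h2b)
    simp only [mul_zero, neg_zero, sub_zero] at h
    refine h.congr fun y => ?_
    simp only [hF, pow_zero, pow_one, one_mul]
    ring
  rw [integral_Ioi_of_hasDerivAt_of_tendsto' hderiv hint hlim]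
  simp only [hF]
  ring

/-- Uniform fragmentation optimality. -/
theorem stmt_15 (B ϱ : ℝ) (hB : 0 < B) (hϱ : 0 < ϱ) :
    -- initial condition
    (∀ x : ℝ, ϱ * (4 * B ^ 2 * x * Real.exp (-(2 * B * x)))
        + Real.exp (-(B * 0)) * (x * (B * x - 2) * Real.exp (-(B * x)))
      = 4 * ϱ * B ^ 2 * x * Real.exp (-(2 * B * x))
        + x * (B * x - 2) * Real.exp (-(B * x))) ∧
    -- boundary condition
    (∀ t : ℝ, ϱ * (4 * B ^ 2 * 0 * Real.exp (-(2 * B * 0)))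
        + Real.exp (-(B * t)) * ((0:ℝ) * (B * 0 - 2) * Real.exp (-(B * 0))) = 0) ∧
    -- `n` solves `∂ₜn + ∂ₓn + 2Bn = 2B∫ₓ^∞ n(y,t)/y dy`
    (∀ x > (0:ℝ), ∀ t : ℝ,
      HasDerivAt (fun s => ϱ * (4 * B ^ 2 * x * Real.exp (-(2 * B * x)))
          + Real.exp (-(B * s)) * (x * (B * x - 2) * Real.exp (-(B * x))))
        (-B * (Real.exp (-(B * t)) * (x * (B * x - 2) * Real.exp (-(B * x))))) t ∧
      HasDerivAt (fun z => ϱ * (4 * B ^ 2 * z * Real.exp (-(2 * B * z)))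
          + Real.exp (-(B * t)) * (z * (B * z - 2) * Real.exp (-(B * z))))
        (ϱ * (4 * B ^ 2 * (1 - 2 * B * x) * Real.exp (-(2 * B * x)))
          + Real.exp (-(B * t)) * ((-(B ^ 2) * x ^ 2 + 4 * B * x - 2)
              * Real.exp (-(B * x)))) x ∧
      (-B * (Real.exp (-(B * t)) * (x * (B * x - 2) * Real.exp (-(B * x)))))
          + (ϱ * (4 * B ^ 2 * (1 - 2 * B * x) * Real.exp (-(2 * B * x)))
            + Real.exp (-(B * t)) * ((-(B ^ 2) * x ^ 2 + 4 * B * x - 2)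
                * Real.exp (-(B * x))))
          + 2 * B * (ϱ * (4 * B ^ 2 * x * Real.exp (-(2 * B * x)))
            + Real.exp (-(B * t)) * (x * (B * x - 2) * Real.exp (-(B * x))))
        = 2 * B * ∫ y in Set.Ioi x,
            (ϱ * (4 * B ^ 2 * y * Real.exp (-(2 * B * y)))
              + Real.exp (-(B * t)) * (y * (B * y - 2) * Real.exp (-(B * y)))) / y) ∧
    -- exact exponential decay of the L¹-distance to equilibrium
    (∀ t : ℝ, (∫ x in Set.Ioi (0:ℝ),
        |(ϱ * (4 * B ^ 2 * x * Real.exp (-(2 * B * x)))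
            + Real.exp (-(B * t)) * (x * (B * x - 2) * Real.exp (-(B * x))))
          - ϱ * (4 * B ^ 2 * x * Real.exp (-(2 * B * x)))|)
      = Real.exp (-(B * t))
        * ∫ x in Set.Ioi (0:ℝ), |x * (B * x - 2) * Real.exp (-(B * x))|) := by
  refine ⟨fun x => by simp [Real.exp_zero]; ring, fun t => by simp, ?_, ?_⟩
  · intro x hx t
    refine ⟨?_, ?_, ?_⟩
    · have h := ((aux_exp_deriv B t).mul_const
        (x * (B * x - 2) * Real.exp (-(B * x)))).const_add
        (ϱ * (4 * B ^ 2 * x * Real.exp (-(2 * B * x))))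
      refine h.congr_deriv ?_
      ring
    · have hA := (((hasDerivAt_id x).const_mul (4 * B ^ 2)).fun_mul
        (aux_exp_deriv (2 * B) x)).const_mul ϱ
      have hpoly := (hasDerivAt_id x).fun_mul (((hasDerivAt_id x).const_mul B).sub_const 2)
      have hB2 := (hpoly.fun_mul (aux_exp_deriv B x)).const_mul (Real.exp (-(B * t)))
      have h := hA.fun_add hB2
      refine h.congr_deriv ?_
      simp only [id_eq]
      ring
    · rw [aux_key_integral B ϱ t x hB hx]
      have hB0 : B ≠ 0 := hB.ne'
      field_simp
      ring
  · intro t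
    have he : 0 < Real.exp (-(B * t)) := Real.exp_pos _
    simp only [add_sub_cancel_left]
    simp_rw [abs_mul, abs_of_pos he]
    rw [integral_const_mul]
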